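/- Let z ∈ ℝ^m, μ_t ∈ U, and let μ_+ ∈ U be a minimizer over U of μ ↦ z^⊤μ + (1/η)V(μ, μ_t). Then for every μ ∈ U: z^⊤(μ_t − μ) ≤ (η/(2σ)) ‖z‖² + (1/η) V(μ, μ_t) − (1/η) V(μ, μ_+). -/

import Mathlib

open scoped RealInnerProductSpace

/-- (Three-point inequality for the CMD/mirror-descent step.) If `μ₊ ∈ U` minimizes
`μ ↦ z^⊤μ + (1/η)V(μ, μ_t)` over `U`, then for every `μ ∈ U`:
`z^⊤(μ_t − μ) ≤ (η/(2σ))‖z‖² + (1/η)V(μ, μ_t) − (1/η)V(μ, μ₊)`. -/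
theorem cmd_three_point (m : ℕ)
    (np nd : EuclideanSpace ℝ (Fin m) → ℝ)
    (hnp_nonneg : ∀ u, 0 ≤ np u)
    (hnp_zero : ∀ u, np u = 0 ↔ u = 0)
    (hnp_smul : ∀ (r : ℝ) u, np (r • u) = |r| * np u)
    (hnp_add : ∀ u v, np (u + v) ≤ np u + np v)
    (hnd : ∀ u, nd u = sSup {r : ℝ | ∃ y, np y ≤ 1 ∧ r = ⟪u, y⟫})
    (σ : ℝ) (hσ : 0 < σ)
    (h : EuclideanSpace ℝ (Fin m) → ℝ)
    (gradh : EuclideanSpace ℝ (Fin m) → EuclideanSpace ℝ (Fin m))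
    (hdiff : ∀ v, HasGradientAt h (gradh v) v)
    (hstrong : ∀ u v, h v + ⟪gradh v, u - v⟫ + σ / 2 * (nd (u - v)) ^ 2 ≤ h u)
    (V : EuclideanSpace ℝ (Fin m) → EuclideanSpace ℝ (Fin m) → ℝ)
    (hV : ∀ x y, V x y = h x - h y - ⟪gradh y, x - y⟫)
    (U : Set (EuclideanSpace ℝ (Fin m)))
    (hU_ne : U.Nonempty) (hU_cl : IsClosed U) (hU_cvx : Convex ℝ U)
    (η : ℝ) (hη : 0 < η)
    (z μt μplus : EuclideanSpace ℝ (Fin m))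
    (hμt : μt ∈ U) (hμplus : μplus ∈ U)
    (hmin : ∀ u ∈ U,
      ⟪z, μplus⟫ + (1 / η) * V μplus μt ≤ ⟪z, u⟫ + (1 / η) * V u μt) :
    ∀ μ ∈ U, ⟪z, μt - μ⟫ ≤
      η / (2 * σ) * (np z) ^ 2 + (1 / η) * V μ μt - (1 / η) * V μ μplus := by
  -- basic facts about np
  have hnp0 : np 0 = 0 := (hnp_zero 0).mpr rfl
  have hnp_neg : ∀ u, np (-u) = np u := by
    intro u
    have := hnp_smul (-1) u
    simpa using this
  -- np is continuous
  have hcont : Continuous np := by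
    by_cases hm : m = 0
    · subst hm
      haveI : Subsingleton (EuclideanSpace ℝ (Fin 0)) := inferInstance
      have heq : ∀ u : EuclideanSpace ℝ (Fin 0), np u = 0 := fun u => by
        rw [show u = 0 from Subsingleton.elim u 0, hnp0]
      simpa [funext heq] using continuous_const
    · set b := EuclideanSpace.basisFun (Fin m) ℝ with hb
      set C : ℝ := ∑ i, np (b i) with hC
      have hC0 : 0 ≤ C := Finset.sum_nonneg fun i _ => hnp_nonneg _
      have hsum : ∀ (s : Finset (Fin m)) (f : Fin m → EuclideanSpace ℝ (Fin m)),
          np (∑ i ∈ s, f i) ≤ ∑ i ∈ s, np (f i) := by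
        intro s
        induction s using Finset.cons_induction with
        | empty => intro f; simp [hnp0]
        | cons a s ha ih =>
          intro f
          rw [Finset.sum_cons, Finset.sum_cons]
          calc np (f a + ∑ x ∈ s, f x) ≤ np (f a) + np (∑ x ∈ s, f x) := hnp_add _ _
            _ ≤ np (f a) + ∑ x ∈ s, np (f x) := by linarith [ih f]
      have hbound : ∀ w : EuclideanSpace ℝ (Fin m), np w ≤ C * ‖w‖ := by
        intro w
        have hrepr : ∑ i, (b.repr w) i • b i = w := b.sum_repr w
        calc np w = np (∑ i, (b.repr w) i • b i) := by rw [hrepr]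
          _ ≤ ∑ i, np ((b.repr w) i • b i) := hsum _ _
          _ = ∑ i, |(b.repr w) i| * np (b i) :=
              Finset.sum_congr rfl fun i _ => hnp_smul _ _
          _ ≤ ∑ i, ‖w‖ * np (b i) := by
              apply Finset.sum_le_sum
              intro i _
              apply mul_le_mul_of_nonneg_right _ (hnp_nonneg _)
              have h1 : (b.repr w) i = ⟪b i, w⟫ := b.repr_apply_apply w i
              rw [h1]
              calc |⟪b i, w⟫| ≤ ‖b i‖ * ‖w‖ := abs_real_inner_le_norm _ _
                _ = ‖w‖ := by rw [b.orthonormal.1 i]; ring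
          _ = C * ‖w‖ := by rw [← Finset.mul_sum, mul_comm]
      have hlip : ∀ a c : EuclideanSpace ℝ (Fin m), |np a - np c| ≤ C * ‖a - c‖ := by
        intro a c
        have h1 : np a ≤ np c + np (a - c) := by
          have := hnp_add c (a - c); simpa using this
        have h2 : np c ≤ np a + np (a - c) := by
          have := hnp_add a (c - a)
          have hneg : np (c - a) = np (a - c) := by
            rw [show c - a = -(a - c) from (neg_sub a c).symm, hnp_neg]
          simpa [hneg] using this
        have := hbound (a - c)
        rw [abs_sub_le_iff]
        constructor <;> linarith
      have : LipschitzWith (Real.toNNReal C) np := by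
        apply LipschitzWith.of_dist_le_mul
        intro a c
        rw [Real.dist_eq, dist_eq_norm, Real.coe_toNNReal C hC0]
        exact hlip a c
      exact this.continuous
  -- Hölder: ⟪w, v⟫ ≤ np w * nd v
  have hHolder : ∀ w v : EuclideanSpace ℝ (Fin m), ⟪w, v⟫ ≤ np w * nd v := by
    intro w v
    by_cases hw : w = 0
    · subst hw
      simp [hnp0]
    · have hnw : 0 < np w := lt_of_le_of_ne (hnp_nonneg w) fun hc =>
        hw ((hnp_zero w).mp hc.symm)
      haveI : Nontrivial (EuclideanSpace ℝ (Fin m)) := nontrivial_of_ne w 0 hw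
      obtain ⟨y₀, hy₀mem, hy₀min⟩ :=
        (isCompact_sphere (0 : EuclideanSpace ℝ (Fin m)) 1).exists_isMinOn
        (NormedSpace.sphere_nonempty.mpr zero_le_one) hcont.continuousOn
      have hy₀norm : ‖y₀‖ = 1 := by simpa using hy₀mem
      set c : ℝ := np y₀ with hc
      have hcpos : 0 < c := by
        rcases lt_or_eq_of_le (hnp_nonneg y₀) with h1 | h1
        · exact h1
        · exfalso
          have : y₀ = 0 := (hnp_zero y₀).mp h1.symm
          rw [this] at hy₀norm; simp at hy₀norm
      have hbd : ∀ y : EuclideanSpace ℝ (Fin m), np y ≤ 1 → ‖y‖ ≤ c⁻¹ := by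
        intro y hy
        by_cases hy0 : y = 0
        · subst hy0; simp; positivity
        · have hny : 0 < ‖y‖ := norm_pos_iff.mpr hy0
          have hmem : ‖y‖⁻¹ • y ∈ Metric.sphere (0 : EuclideanSpace ℝ (Fin m)) 1 := by
            simp [norm_smul, abs_of_pos (inv_pos.mpr hny), inv_mul_cancel₀ hny.ne']
          have h1 : c ≤ np (‖y‖⁻¹ • y) := hy₀min hmem
          rw [hnp_smul, abs_of_pos (inv_pos.mpr hny)] at h1
          have h2 : c * ‖y‖ ≤ np y := by
            have := mul_le_mul_of_nonneg_right h1 (le_of_lt hny)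
            calc c * ‖y‖ ≤ ‖y‖⁻¹ * np y * ‖y‖ := this
              _ = np y := by field_simp
          have h3 : ‖y‖ * c ≤ 1 := by linarith [le_trans h2 hy]
          rw [← one_div]
          exact (le_div_iff₀ hcpos).mpr h3
      have hbdd : BddAbove {r : ℝ | ∃ y, np y ≤ 1 ∧ r = ⟪v, y⟫} := by
        refine ⟨‖v‖ * c⁻¹, ?_⟩
        rintro r ⟨y, hy, rfl⟩
        calc ⟪v, y⟫ ≤ ‖v‖ * ‖y‖ := real_inner_le_norm _ _
          _ ≤ ‖v‖ * c⁻¹ := mul_le_mul_of_nonneg_left (hbd y hy) (norm_nonneg _)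
      have hmemS : ⟪v, (np w)⁻¹ • w⟫ ∈ {r : ℝ | ∃ y, np y ≤ 1 ∧ r = ⟪v, y⟫} := by
        refine ⟨(np w)⁻¹ • w, ?_, rfl⟩
        rw [hnp_smul, abs_of_pos (inv_pos.mpr hnw), inv_mul_cancel₀ hnw.ne']
      have hle : ⟪v, (np w)⁻¹ • w⟫ ≤ nd v := by
        rw [hnd]; exact le_csSup hbdd hmemS
      have heq : ⟪w, v⟫ = np w * ⟪v, (np w)⁻¹ • w⟫ := by
        rw [real_inner_smul_right, real_inner_comm]
        field_simp
      rw [heq]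
      exact mul_le_mul_of_nonneg_left hle (le_of_lt hnw)
  -- nd is symmetric under negation
  have hnd_neg : ∀ v : EuclideanSpace ℝ (Fin m), nd (-v) = nd v := by
    intro v
    rw [hnd, hnd]
    congr 1
    ext r
    constructor
    · rintro ⟨y, hy, rfl⟩
      exact ⟨-y, by rwa [hnp_neg], by simp⟩
    · rintro ⟨y, hy, rfl⟩
      exact ⟨-y, by rwa [hnp_neg], by simp⟩
  -- first-order optimality at μplus
  have hA : ∀ u ∈ U, 0 ≤ ⟪z, u - μplus⟫ +
      (1 / η) * (⟪gradh μplus, u - μplus⟫ - ⟪gradh μt, u - μplus⟫) := by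
    intro u hu
    set d : EuclideanSpace ℝ (Fin m) := u - μplus with hd
    set c₁ : ℝ := ⟪z, d⟫ - (1 / η) * ⟪gradh μt, d⟫ with hc₁
    set g : ℝ → ℝ := fun t => t * c₁ + (1 / η) * (h (μplus + t • d) - h μplus) with hg
    have hg0 : g 0 = 0 := by simp [hg]
    have hgpos : ∀ t ∈ Set.Ioc (0 : ℝ) 1, 0 ≤ g t := by
      intro t ht
      set ut : EuclideanSpace ℝ (Fin m) := μplus + t • d with hut
      have hutU : ut ∈ U := by
        have hco : ut = (1 - t) • μplus + t • u := by
          rw [hut, hd, smul_sub, sub_smul, one_smul]; abel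
        rw [hco]
        exact hU_cvx hμplus hu (by linarith [ht.2]) (le_of_lt ht.1) (by ring)
      have hm := hmin ut hutU
      rw [hV, hV] at hm
      have hinner1 : ⟪z, ut⟫ = ⟪z, μplus⟫ + t * ⟪z, d⟫ := by
        rw [hut, inner_add_right, real_inner_smul_right]
      have hinner2 : ⟪gradh μt, ut - μt⟫ = ⟪gradh μt, μplus - μt⟫ + t * ⟪gradh μt, d⟫ := by
        have he : ut - μt = (μplus - μt) + t • d := by rw [hut]; abel
        rw [he, inner_add_right, real_inner_smul_right]
      rw [hinner1, hinner2] at hm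
      have hgt : g t = t * c₁ + (1 / η) * (h ut - h μplus) := rfl
      rw [hgt, hc₁]
      have h1η : (0:ℝ) < 1 / η := by positivity
      nlinarith [hm]
    have hL : HasDerivAt (fun t : ℝ => μplus + t • d) d 0 := by
      simpa using ((hasDerivAt_id (0 : ℝ)).smul_const d).const_add μplus
    have hφ : HasDerivAt (fun t : ℝ => h (μplus + t • d)) ⟪gradh μplus, d⟫ 0 := by
      have hF := (hdiff μplus).hasFDerivAt
      have hF' : HasFDerivAt h
          ((InnerProductSpace.toDual ℝ (EuclideanSpace ℝ (Fin m))) (gradh μplus))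
          (μplus + (0:ℝ) • d) := by simpa using hF
      simpa [Function.comp_def, InnerProductSpace.toDual_apply_apply] using
        hF'.comp_hasDerivAt 0 hL
    have hg' : HasDerivAt g (c₁ + (1 / η) * ⟪gradh μplus, d⟫) 0 := by
      have h1 : HasDerivAt (fun t : ℝ => t * c₁) c₁ 0 := hasDerivAt_mul_const c₁
      have h2 : HasDerivAt (fun t : ℝ => (1 / η) * (h (μplus + t • d) - h μplus))
          ((1 / η) * ⟪gradh μplus, d⟫) 0 := (hφ.sub_const (h μplus)).const_mul (1 / η)
      exact h1.add h2
    have hderiv_nonneg : 0 ≤ c₁ + (1 / η) * ⟪gradh μplus, d⟫ := by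
      have htend : Filter.Tendsto (slope g 0) (nhdsWithin 0 (Set.Ioi 0))
          (nhds (c₁ + (1 / η) * ⟪gradh μplus, d⟫)) := by
        refine (hasDerivAt_iff_tendsto_slope.mp hg').mono_left
          (nhdsWithin_mono _ ?_)
        intro x hx
        exact ne_of_gt hx
      refine ge_of_tendsto htend ?_
      filter_upwards [Ioc_mem_nhdsGT (zero_lt_one)] with t ht
      have hs : slope g 0 t = g t / t := by
        rw [slope_def_field, hg0]; ring
      rw [hs]
      exact div_nonneg (hgpos t ht) (le_of_lt ht.1)
    rw [hc₁] at hderiv_nonneg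
    linarith
  -- main argument
  intro μ hμ
  have hAμ := hA μ hμ
  have h3pt : V μ μt - V μ μplus - V μplus μt =
      ⟪gradh μplus, μ - μplus⟫ - ⟪gradh μt, μ - μplus⟫ := by
    rw [hV, hV, hV]
    have e1 : ⟪gradh μt, μ - μt⟫ = ⟪gradh μt, μ - μplus⟫ + ⟪gradh μt, μplus - μt⟫ := by
      rw [← inner_add_right]; congr 1; abel
    rw [e1]; ring
  have hsc : σ / 2 * (nd (μplus - μt)) ^ 2 ≤ V μplus μt := by
    have := hstrong μplus μt
    rw [hV]
    linarith
  have hHz := hHolder z (μt - μplus)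
  have hndsym : nd (μt - μplus) = nd (μplus - μt) := by
    rw [show μt - μplus = -(μplus - μt) from (neg_sub μplus μt).symm, hnd_neg]
  have hyoung : np z * nd (μt - μplus) ≤
      η / (2 * σ) * (np z) ^ 2 + σ / (2 * η) * (nd (μt - μplus)) ^ 2 := by
    have hkey : η / (2 * σ) * (np z) ^ 2 + σ / (2 * η) * (nd (μt - μplus)) ^ 2
        - np z * nd (μt - μplus)
        = (η * np z - σ * nd (μt - μplus)) ^ 2 / (2 * σ * η) := by
      field_simp
      ring
    nlinarith [sq_nonneg (η * np z - σ * nd (μt - μplus)),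
      div_nonneg (sq_nonneg (η * np z - σ * nd (μt - μplus)))
        (by positivity : (0:ℝ) ≤ 2 * σ * η)]
  have hsplit : ⟪z, μt - μ⟫ = ⟪z, μt - μplus⟫ - ⟪z, μ - μplus⟫ := by
    rw [← inner_sub_right]; congr 1; abel
  have h1η : (0:ℝ) < 1 / η := by positivity
  have hsc' : 1 / η * (σ / 2 * (nd (μplus - μt)) ^ 2) ≤ 1 / η * V μplus μt :=
    mul_le_mul_of_nonneg_left hsc (le_of_lt h1η)
  rw [hsplit]
  have hAμ' : -⟪z, μ - μplus⟫ ≤ (1 / η) * (V μ μt - V μ μplus - V μplus μt) := by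
    rw [h3pt]; linarith
  have hfinal : ⟪z, μt - μplus⟫ ≤
      η / (2 * σ) * (np z) ^ 2 + 1 / η * V μplus μt := by
    calc ⟪z, μt - μplus⟫ ≤ np z * nd (μt - μplus) := hHz
      _ ≤ η / (2 * σ) * (np z) ^ 2 + σ / (2 * η) * (nd (μt - μplus)) ^ 2 := hyoung
      _ ≤ η / (2 * σ) * (np z) ^ 2 + 1 / η * V μplus μt := by
          rw [hndsym]
          have he : σ / (2 * η) * (nd (μplus - μt)) ^ 2
              = 1 / η * (σ / 2 * (nd (μplus - μt)) ^ 2) := by ring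
          rw [he]
          linarith
  have hexp : (1 / η) * (V μ μt - V μ μplus - V μplus μt)
      = (1 / η) * V μ μt - (1 / η) * V μ μplus - (1 / η) * V μplus μt := by ring
  linarith [hAμ', hfinal, hexp]
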